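/- Let σ = (s_x, s_α, h) be a SeqSL model and φ1, φ2 PSeqSL formulas, φ = φ1 -* φ2. Let L = FV_x(φ1) ∪ FV_x(φ2), let B be the first max(sz(φ1), sz(φ2)) locations of Loc ∖ (dom(h) ∪ s_x(L)), let β̄ be a fresh sequence variable and s_α' an extension of s_α assigning to β̄ a sequence different from the value under (s_x,s_α',h) of every sequence term occurring in SeqTerms(φ), and set σ' = (s_x, s_α', h), D = B ∪ s_x(L), and R = { value of t_α under σ' : t_α ∈ SeqTerms(φ) } ∪ { ε, s_α'(β̄) }. Then (s_x,s_α,h) ⊨ φ1 -* φ2 if and only if: for every heap h' such that dom(h') ∩ dom(h) = ∅, (s_x,s_α',h') ⊨ φ1, dom(h') ⊆ D, and rng(h') ⊆ R, it holds that (s_x,s_α',h ⊎ h') ⊨ φ2. -/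

import Mathlib

/-! Common framework for sequence-heap separation logic (SeqSL / PSeqSL).

Values: `Sum.inl n` is an element of `Loc ∪ Val = ℕ` (locations are the
naturals), `Sum.inr` is one of the two atoms `nil` and `#`.  A heap is a
finite partial map from locations to finite sequences of values. -/

inductive SAtom : Type
  | anil : SAtom
  | ahash : SAtom
deriving DecidableEq

abbrev SVal : Type := ℕ ⊕ SAtom

abbrev Word : Type := List SVal

abbrev Heap : Type := Finmap fun _ : ℕ => Word

/-- Program-variable terms: `nil`, `#`, or a program variable. -/
inductive PTerm : Type
  | nil : PTerm
  | hash : PTerm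
  | pvar : ℕ → PTerm
deriving DecidableEq

/-- Sequence terms: `ε`, an individual term, a sequence variable, or a
concatenation. -/
inductive STerm : Type
  | eps : STerm
  | atom : PTerm → STerm
  | svar : ℕ → STerm
  | conc : STerm → STerm → STerm
deriving DecidableEq

/-- PSeqSL formulas. -/
inductive PFormula : Type
  | eqx : PTerm → PTerm → PFormula
  | eqs : STerm → STerm → PFormula
  | fls : PFormula
  | imp : PFormula → PFormula → PFormula
  | emp : PFormula
  | pto : ℕ → STerm → PFormula
  | star : PFormula → PFormula → PFormula
  | wand : PFormula → PFormula → PFormula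
deriving DecidableEq

def PTerm.eval (sx : ℕ → SVal) : PTerm → SVal
  | .nil => Sum.inr SAtom.anil
  | .hash => Sum.inr SAtom.ahash
  | .pvar x => sx x

def STerm.eval (sx : ℕ → SVal) (sa : ℕ → Word) : STerm → Word
  | .eps => []
  | .atom t => [t.eval sx]
  | .svar a => sa a
  | .conc t₁ t₂ => t₁.eval sx sa ++ t₂.eval sx sa

/-- Satisfaction of PSeqSL formulas. -/
def PFormula.Sat (sx : ℕ → SVal) (sa : ℕ → Word) : PFormula → Heap → Prop
  | .eqx t₁ t₂, _ => t₁.eval sx = t₂.eval sx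
  | .eqs t₁ t₂, _ => t₁.eval sx sa = t₂.eval sx sa
  | .fls, _ => False
  | .imp φ₁ φ₂, h => PFormula.Sat sx sa φ₁ h → PFormula.Sat sx sa φ₂ h
  | .emp, h => h = ∅
  | .pto x t, h => ∃ l : ℕ, sx x = Sum.inl l ∧ h = Finmap.singleton l (t.eval sx sa)
  | .star φ₁ φ₂, h => ∃ h₁ h₂ : Heap, h₁.Disjoint h₂ ∧ h = h₁ ∪ h₂ ∧
      PFormula.Sat sx sa φ₁ h₁ ∧ PFormula.Sat sx sa φ₂ h₂
  | .wand φ₁ φ₂, h => ∀ h₁ : Heap, h₁.Disjoint h → PFormula.Sat sx sa φ₁ h₁ →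
      PFormula.Sat sx sa φ₂ (h₁ ∪ h)

/-- Free program variables of a program-variable term. -/
def PTerm.fv : PTerm → Finset ℕ
  | .pvar x => {x}
  | _ => ∅

/-- Free program variables of a sequence term. -/
def STerm.fvx : STerm → Finset ℕ
  | .eps => ∅
  | .atom t => t.fv
  | .svar _ => ∅
  | .conc t₁ t₂ => t₁.fvx ∪ t₂.fvx

/-- Free program variables of a PSeqSL formula. -/
def PFormula.fvx : PFormula → Finset ℕ
  | .eqx t₁ t₂ => t₁.fv ∪ t₂.fv
  | .eqs t₁ t₂ => t₁.fvx ∪ t₂.fvx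
  | .fls => ∅
  | .imp φ₁ φ₂ => φ₁.fvx ∪ φ₂.fvx
  | .emp => ∅
  | .pto x t => {x} ∪ t.fvx
  | .star φ₁ φ₂ => φ₁.fvx ∪ φ₂.fvx
  | .wand φ₁ φ₂ => φ₁.fvx ∪ φ₂.fvx

/-- Free sequence variables of a sequence term. -/
def STerm.fva : STerm → Finset ℕ
  | .eps => ∅
  | .atom _ => ∅
  | .svar a => {a}
  | .conc t₁ t₂ => t₁.fva ∪ t₂.fva

/-- Free sequence variables of a PSeqSL formula. -/
def PFormula.fva : PFormula → Finset ℕ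
  | .eqx _ _ => ∅
  | .eqs t₁ t₂ => t₁.fva ∪ t₂.fva
  | .fls => ∅
  | .imp φ₁ φ₂ => φ₁.fva ∪ φ₂.fva
  | .emp => ∅
  | .pto _ t => t.fva
  | .star φ₁ φ₂ => φ₁.fva ∪ φ₂.fva
  | .wand φ₁ φ₂ => φ₁.fva ∪ φ₂.fva

/-- Size of a PSeqSL formula. -/
def PFormula.sz : PFormula → ℕ
  | .eqx _ _ => 0
  | .eqs _ _ => 0
  | .fls => 0
  | .imp φ₁ φ₂ => max φ₁.sz φ₂.sz
  | .emp => 1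
  | .pto _ _ => 1
  | .star φ₁ φ₂ => φ₁.sz + φ₂.sz
  | .wand _ φ₂ => φ₂.sz

/-- The set of sequence terms (including program-variable terms) occurring in
a PSeqSL formula. -/
def PFormula.seqTerms : PFormula → Finset STerm
  | .eqx t₁ t₂ => {STerm.atom t₁, STerm.atom t₂}
  | .eqs t₁ t₂ => {t₁, t₂}
  | .fls => ∅
  | .imp φ₁ φ₂ => φ₁.seqTerms ∪ φ₂.seqTerms
  | .emp => ∅
  | .pto x t => {STerm.atom (PTerm.pvar x), t}
  | .star φ₁ φ₂ => φ₁.seqTerms ∪ φ₂.seqTerms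
  | .wand φ₁ φ₂ => φ₁.seqTerms ∪ φ₂.seqTerms

/-- The first `k` elements of a set `S ⊆ ℕ`. -/
def firstN (S : Set ℕ) (k : ℕ) : Set ℕ :=
  {l | l ∈ S ∧ Set.ncard {l' ∈ S | l' < l} < k}

/-! ### Auxiliary infrastructure for the small model property -/

namespace SmallModelAux

open Finmap

/-- Build a heap with key set `s` and value function `f`. -/
def mkHeap (s : Finset ℕ) (f : ℕ → Word) : Heap :=
  ((s.sort (· ≤ ·)).map fun l => (⟨l, f l⟩ : Sigma fun _ : ℕ => Word)).toFinmap

theorem dlookup_map_list (f : ℕ → Word) (L : List ℕ) (a : ℕ) :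
    List.dlookup a (L.map fun l => (⟨l, f l⟩ : Sigma fun _ : ℕ => Word)) =
      if a ∈ L then some (f a) else none := by
  induction L with
  | nil => simp
  | cons b L ih =>
    by_cases hab : a = b
    · subst hab
      simp [List.dlookup_cons_eq]
    · rw [List.map_cons, List.dlookup_cons_ne _ _ (by simpa using hab), ih]
      simp [hab]

theorem lookup_mkHeap (s : Finset ℕ) (f : ℕ → Word) (a : ℕ) :
    (mkHeap s f).lookup a = if a ∈ s then some (f a) else none := by
  rw [mkHeap, Finmap.dlookup_list_toFinmap, dlookup_map_list]
  simp

theorem mem_mkHeap (s : Finset ℕ) (f : ℕ → Word) (a : ℕ) :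
    a ∈ mkHeap s f ↔ a ∈ s := by
  rw [Finmap.mem_iff]
  by_cases h : a ∈ s <;> simp [lookup_mkHeap, h]

theorem keys_mkHeap (s : Finset ℕ) (f : ℕ → Word) : (mkHeap s f).keys = s := by
  ext a
  rw [Finmap.mem_keys, mem_mkHeap]

theorem mkHeap_union (s t : Finset ℕ) (f : ℕ → Word) :
    mkHeap s f ∪ mkHeap t f = mkHeap (s ∪ t) f := by
  apply Finmap.ext_lookup
  intro a
  by_cases h : a ∈ s
  · rw [Finmap.lookup_union_left (by rw [mem_mkHeap]; exact h)]
    simp [lookup_mkHeap, h]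
  · rw [Finmap.lookup_union_right (by rw [mem_mkHeap]; exact h)]
    by_cases ht : a ∈ t <;> simp [lookup_mkHeap, h, ht]

theorem eq_mkHeap (h : Heap) : h = mkHeap h.keys (fun l => (h.lookup l).getD []) := by
  apply Finmap.ext_lookup
  intro a
  rw [lookup_mkHeap]
  by_cases ha : a ∈ h.keys
  · obtain ⟨v, hv⟩ := Finmap.mem_iff.1 (Finmap.mem_keys.1 ha)
    simp [ha, hv]
  · simp [ha, Finmap.lookup_eq_none.2 (fun hm => ha (Finmap.mem_keys.2 hm))]

/-- A splitting numeric lemma. -/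
theorem split_min (p q a b c : ℕ) (h : min (p + q) (a + b) = min (p + q) c) :
    ∃ a' b', a' + b' = c ∧ min p a = min p a' ∧ min q b = min q b' := by
  refine ⟨if a + b < p + q then a else if b < q then c - b else min a p,
    c - (if a + b < p + q then a else if b < q then c - b else min a p), ?_, ?_, ?_⟩ <;>
    split_ifs <;> omega

section Core

variable (sx : ℕ → SVal) (L : Finset ℕ) (TV : Finset Word)

/-- A location is named if some program variable of `L` denotes it. -/
def Named (l : ℕ) : Prop := ∃ x ∈ L, sx x = Sum.inl l

instance (l : ℕ) : Decidable (Named sx L l) := by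
  unfold Named; infer_instance

/-- Number of non-named cells of a heap. -/
def anonCount (h : Heap) : ℕ := (h.keys.filter fun l => ¬ Named sx L l).card

/-- Two words are equivalent when they are equal or both outside `TV`. -/
def VEq (v₁ v₂ : Word) : Prop := v₁ = v₂ ∨ (v₁ ∉ TV ∧ v₂ ∉ TV)

/-- Lifting of `VEq` to optional words. -/
def OEq : Option Word → Option Word → Prop
  | none, none => True
  | some v₁, some v₂ => VEq TV v₁ v₂
  | _, _ => False

theorem VEq.refl' (v : Word) : VEq TV v v := Or.inl rfl

theorem VEq.symm' {v₁ v₂ : Word} (h : VEq TV v₁ v₂) : VEq TV v₂ v₁ := by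
  rcases h with h | h
  · exact Or.inl h.symm
  · exact Or.inr ⟨h.2, h.1⟩

theorem OEq.refl' (o : Option Word) : OEq TV o o := by
  cases o with
  | none => trivial
  | some v => exact VEq.refl' TV v

theorem OEq.symm' {o₁ o₂ : Option Word} (h : OEq TV o₁ o₂) : OEq TV o₂ o₁ := by
  cases o₁ <;> cases o₂ <;> simp [OEq] at h ⊢
  exact VEq.symm' TV h

/-- The small-model heap equivalence with threshold `n`. -/
def HEquiv (n : ℕ) (h₁ h₂ : Heap) : Prop :=
  (∀ l, Named sx L l → OEq TV (h₁.lookup l) (h₂.lookup l)) ∧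
    min n (anonCount sx L h₁) = min n (anonCount sx L h₂)

theorem HEquiv.symm' {n h₁ h₂} (h : HEquiv sx L TV n h₁ h₂) : HEquiv sx L TV n h₂ h₁ :=
  ⟨fun l hl => OEq.symm' TV (h.1 l hl), (h.2).symm⟩

theorem HEquiv.mono' {n m h₁ h₂} (hmn : m ≤ n) (h : HEquiv sx L TV n h₁ h₂) :
    HEquiv sx L TV m h₁ h₂ := by
  refine ⟨h.1, ?_⟩
  have := h.2
  omega

theorem anonCount_union {h₁ h₂ : Heap} (hd : h₁.Disjoint h₂) :
    anonCount sx L (h₁ ∪ h₂) = anonCount sx L h₁ + anonCount sx L h₂ := by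
  unfold anonCount
  rw [Finmap.keys_union, Finset.filter_union, Finset.card_union_of_disjoint]
  rw [Finset.disjoint_left]
  intro a ha₁ ha₂
  simp only [Finset.mem_filter, Finmap.mem_keys] at ha₁ ha₂
  exact hd a ha₁.1 ha₂.1

theorem anonZero_lookup {h : Heap} (ha : anonCount sx L h = 0) {l : ℕ}
    (hl : ¬ Named sx L l) : h.lookup l = none := by
  rw [Finmap.lookup_eq_none]
  intro hm
  have : l ∈ h.keys.filter fun l => ¬ Named sx L l := by
    simp [Finmap.mem_keys, hm, hl]
  unfold anonCount at ha
  rw [Finset.card_eq_zero] at ha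
  simp [ha] at this

end Core

end SmallModelAux

namespace SmallModelAux

variable (sx : ℕ → SVal) (L : Finset ℕ) (TV : Finset Word)

theorem oeq_none_left {o : Option Word} (h : OEq TV none o) : o = none := by
  cases o with
  | none => rfl
  | some v => exact absurd h (by simp [OEq])

theorem oeq_some_left {v : Word} {o : Option Word} (h : OEq TV (some v) o) :
    ∃ v', o = some v' ∧ VEq TV v v' := by
  cases o with
  | none => exact absurd h (by simp [OEq])
  | some v' => exact ⟨v', rfl, h⟩

/-- The finite set of named locations. -/
def namedFinset : Finset ℕ :=
  L.biUnion fun x => match sx x with | Sum.inl l => {l} | Sum.inr _ => ∅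

theorem named_mem_namedFinset {l : ℕ} (h : Named sx L l) : l ∈ namedFinset sx L := by
  obtain ⟨x, hx, hxl⟩ := h
  exact Finset.mem_biUnion.2 ⟨x, hx, by rw [hxl]; simp⟩

/-- Core lemma: satisfaction is invariant under `HEquiv` at threshold `sz φ`. -/
theorem sat_of_hequiv (sa : ℕ → Word) :
    ∀ φ : PFormula, (∀ x ∈ φ.fvx, x ∈ L) →
      (∀ t ∈ φ.seqTerms, STerm.eval sx sa t ∈ TV) →
      ∀ h₁ h₂ : Heap, HEquiv sx L TV φ.sz h₁ h₂ → φ.Sat sx sa h₁ → φ.Sat sx sa h₂ := by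
  intro φ
  induction φ with
  | eqx t₁ t₂ => intro _ _ h₁ h₂ _ hs; exact hs
  | eqs t₁ t₂ => intro _ _ h₁ h₂ _ hs; exact hs
  | fls => intro _ _ h₁ h₂ _ hs; exact hs
  | imp φa φb iha ihb =>
    intro hfv hT h₁ h₂ he hs hsa2
    have ha1 : φa.Sat sx sa h₁ :=
      iha (fun x hx => hfv x (Finset.mem_union_left _ hx))
        (fun t ht => hT t (Finset.mem_union_left _ ht)) h₂ h₁
        (HEquiv.symm' sx L TV (HEquiv.mono' sx L TV (le_max_left _ _) he)) hsa2
    exact ihb (fun x hx => hfv x (Finset.mem_union_right _ hx))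
      (fun t ht => hT t (Finset.mem_union_right _ ht)) h₁ h₂
      (HEquiv.mono' sx L TV (le_max_right _ _) he) (hs ha1)
  | emp =>
    intro hfv hT h₁ h₂ he hs
    simp only [PFormula.Sat] at hs ⊢
    subst hs
    have hanon0 : anonCount sx L (∅ : Heap) = 0 := by
      simp [anonCount, Finmap.keys_empty]
    have hanon2 : anonCount sx L h₂ = 0 := by
      have h2 := he.2
      simp only [PFormula.sz] at h2
      omega
    apply Finmap.ext_lookup
    intro l
    rw [Finmap.lookup_empty]
    by_cases hN : Named sx L l
    · have h1 := he.1 l hN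
      rw [Finmap.lookup_empty] at h1
      exact oeq_none_left TV h1
    · exact anonZero_lookup sx L hanon2 hN
  | pto x t =>
    intro hfv hT h₁ h₂ he hs
    simp only [PFormula.Sat] at hs ⊢
    obtain ⟨l, hxl, rfl⟩ := hs
    have hNl : Named sx L l := ⟨x, hfv x (by simp [PFormula.fvx]), hxl⟩
    have htv : STerm.eval sx sa t ∈ TV := hT t (by simp [PFormula.seqTerms])
    have h1 := he.1 l hNl
    rw [Finmap.lookup_singleton_eq] at h1
    obtain ⟨v₂, hv₂, hveq⟩ := oeq_some_left TV h1
    have hv2eq : v₂ = STerm.eval sx sa t := by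
      rcases hveq with hh | hh
      · exact hh.symm
      · exact absurd htv hh.1
    have hanon1 : anonCount sx L (Finmap.singleton l (STerm.eval sx sa t) : Heap) = 0 := by
      unfold anonCount
      rw [Finmap.keys_singleton, Finset.card_eq_zero, Finset.filter_eq_empty_iff]
      intro a ha
      rw [Finset.mem_singleton] at ha
      subst ha
      simp [hNl]
    have hanon2 : anonCount sx L h₂ = 0 := by
      have h2 := he.2
      simp only [PFormula.sz] at h2
      omega
    refine ⟨l, hxl, ?_⟩
    apply Finmap.ext_lookup
    intro a
    by_cases hal : a = l
    · subst hal
      rw [Finmap.lookup_singleton_eq, hv₂, hv2eq]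
    · have hnotmem : a ∉ (Finmap.singleton l (STerm.eval sx sa t) : Heap) := by
        rw [Finmap.mem_singleton]; exact hal
      rw [Finmap.lookup_eq_none.2 hnotmem]
      by_cases hN : Named sx L a
      · have ha1 := he.1 a hN
        rw [Finmap.lookup_eq_none.2 hnotmem] at ha1
        exact oeq_none_left TV ha1
      · exact anonZero_lookup sx L hanon2 hN
  | star φa φb iha ihb =>
    intro hfv hT h₁ h₂ he hs
    simp only [PFormula.Sat] at hs ⊢
    obtain ⟨ha, hb, hdis, rfl, sata, satb⟩ := hs
    have hanon_sum : anonCount sx L (ha ∪ hb) = anonCount sx L ha + anonCount sx L hb :=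
      anonCount_union sx L hdis
    have hmins := he.2
    simp only [PFormula.sz] at hmins
    rw [hanon_sum] at hmins
    obtain ⟨a', b', hab', hminA, hminB⟩ := split_min φa.sz φb.sz _ _ _ hmins
    set f2 : ℕ → Word := fun l => (h₂.lookup l).getD [] with hf2
    set A₂ : Finset ℕ := h₂.keys.filter (fun l => ¬ Named sx L l) with hA₂
    have hA₂card : A₂.card = anonCount sx L h₂ := rfl
    obtain ⟨SaA, hSaA_sub, hSaA_card⟩ : ∃ SaA ⊆ A₂, SaA.card = a' :=
      Finset.exists_subset_card_eq (by omega)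
    set NkA : Finset ℕ := h₂.keys.filter (fun l => Named sx L l ∧ l ∈ ha) with hNkA
    set Sa : Finset ℕ := NkA ∪ SaA with hSa
    have hSa_sub : Sa ⊆ h₂.keys := by
      intro l hl
      rcases Finset.mem_union.1 hl with hl | hl
      · exact (Finset.mem_filter.1 hl).1
      · exact (Finset.mem_filter.1 (hSaA_sub hl)).1
    have hf2_some : ∀ l ∈ h₂.keys, h₂.lookup l = some (f2 l) := by
      intro l hl
      obtain ⟨v, hv⟩ := Finmap.mem_iff.1 (Finmap.mem_keys.1 hl)
      simp [hf2, hv]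
    refine ⟨mkHeap Sa f2, mkHeap (h₂.keys \ Sa) f2, ?_, ?_, ?_, ?_⟩
    · intro l hl hl'
      rw [mem_mkHeap] at hl hl'
      exact (Finset.mem_sdiff.1 hl').2 hl
    · rw [mkHeap_union, Finset.union_sdiff_of_subset hSa_sub]
      exact eq_mkHeap h₂
    · -- Sat φa (mkHeap Sa f2)
      apply iha (fun x hx => hfv x (Finset.mem_union_left _ hx))
        (fun t ht => hT t (Finset.mem_union_left _ ht)) ha _ ?_ sata
      constructor
      · intro l hN
        by_cases hla : l ∈ ha
        · have h1 := he.1 l hN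
          rw [Finmap.lookup_union_left hla] at h1
          obtain ⟨v, hv⟩ := Finmap.mem_iff.1 hla
          rw [hv] at h1 ⊢
          obtain ⟨v₂, hv₂, hveq⟩ := oeq_some_left TV h1
          have hl2 : l ∈ h₂.keys := Finmap.mem_keys.2 (Finmap.mem_of_lookup_eq_some hv₂)
          have hlSa : l ∈ Sa := Finset.mem_union_left _ (Finset.mem_filter.2 ⟨hl2, hN, hla⟩)
          rw [lookup_mkHeap, if_pos hlSa]
          have hfv2 : f2 l = v₂ := by simp [hf2, hv₂]
          rw [hfv2]
          exact hveq
        · rw [Finmap.lookup_eq_none.2 hla, lookup_mkHeap, if_neg ?_]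
          · trivial
          · intro hlSa
            rcases Finset.mem_union.1 hlSa with hl | hl
            · exact hla (Finset.mem_filter.1 hl).2.2
            · exact (Finset.mem_filter.1 (hSaA_sub hl)).2 hN
      · have hkeys : (mkHeap Sa f2).keys = Sa := keys_mkHeap _ _
        have hcnt : anonCount sx L (mkHeap Sa f2) = a' := by
          unfold anonCount
          rw [hkeys, hSa, Finset.filter_union]
          have h1 : NkA.filter (fun l => ¬ Named sx L l) = ∅ := by
            rw [Finset.filter_eq_empty_iff]
            intro a hha
            simp only [not_not]
            exact (Finset.mem_filter.1 hha).2.1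
          have h2 : SaA.filter (fun l => ¬ Named sx L l) = SaA := by
            rw [Finset.filter_true_of_mem]
            intro a hha
            exact (Finset.mem_filter.1 (hSaA_sub hha)).2
          rw [h1, h2, Finset.empty_union, hSaA_card]
        rw [hcnt]
        exact hminA
    · -- Sat φb (mkHeap (keys \ Sa) f2)
      apply ihb (fun x hx => hfv x (Finset.mem_union_right _ hx))
        (fun t ht => hT t (Finset.mem_union_right _ ht)) hb _ ?_ satb
      constructor
      · intro l hN
        by_cases hlb : l ∈ hb
        · have hla : l ∉ ha := fun hla => hdis l hla hlb
          have h1 := he.1 l hN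
          rw [Finmap.lookup_union_right hla] at h1
          obtain ⟨v, hv⟩ := Finmap.mem_iff.1 hlb
          rw [hv] at h1 ⊢
          obtain ⟨v₂, hv₂, hveq⟩ := oeq_some_left TV h1
          have hl2 : l ∈ h₂.keys := Finmap.mem_keys.2 (Finmap.mem_of_lookup_eq_some hv₂)
          have hlSb : l ∈ h₂.keys \ Sa := by
            rw [Finset.mem_sdiff]
            refine ⟨hl2, fun hlSa => ?_⟩
            rcases Finset.mem_union.1 hlSa with hl | hl
            · exact hla (Finset.mem_filter.1 hl).2.2
            · exact (Finset.mem_filter.1 (hSaA_sub hl)).2 hN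
          rw [lookup_mkHeap, if_pos hlSb]
          have hfv2 : f2 l = v₂ := by simp [hf2, hv₂]
          rw [hfv2]
          exact hveq
        · rw [Finmap.lookup_eq_none.2 hlb, lookup_mkHeap, if_neg ?_]
          · trivial
          · intro hlSb
            rw [Finset.mem_sdiff] at hlSb
            have hl2 : l ∈ h₂ := Finmap.mem_keys.1 hlSb.1
            obtain ⟨v₂, hv₂⟩ := Finmap.mem_iff.1 hl2
            have h1 := he.1 l hN
            rw [hv₂] at h1
            have h1' := oeq_some_left TV (OEq.symm' TV h1)
            obtain ⟨v₁, hv₁, _⟩ := h1'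
            have hl1 : l ∈ ha ∪ hb := Finmap.mem_of_lookup_eq_some hv₁
            rcases Finmap.mem_union.1 hl1 with hl | hl
            · exact hlSb.2 (Finset.mem_union_left _ (Finset.mem_filter.2 ⟨hlSb.1, hN, hl⟩))
            · exact hlb hl
      · have hkeys : (mkHeap (h₂.keys \ Sa) f2).keys = h₂.keys \ Sa := keys_mkHeap _ _
        have hcnt : anonCount sx L (mkHeap (h₂.keys \ Sa) f2) = b' := by
          unfold anonCount
          rw [hkeys]
          have hset : (h₂.keys \ Sa).filter (fun l => ¬ Named sx L l) = A₂ \ SaA := by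
            ext a
            simp only [Finset.mem_filter, Finset.mem_sdiff, hA₂, hSa, Finset.mem_union,
              hNkA, Finset.mem_filter]
            constructor
            · rintro ⟨⟨hk, hnotSa⟩, hnN⟩
              exact ⟨⟨hk, hnN⟩, fun hmem => hnotSa (Or.inr hmem)⟩
            · rintro ⟨⟨hk, hnN⟩, hnotSaA⟩
              refine ⟨⟨hk, ?_⟩, hnN⟩
              rintro (hmem | hmem)
              · exact hnN hmem.2.1
              · exact hnotSaA hmem
          rw [hset, Finset.card_sdiff_of_subset hSaA_sub, hA₂card, hSaA_card]
          omega
        rw [hcnt]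
        exact hminB
  | wand φa φb iha ihb =>
    intro hfv hT h₁ h₂ he hs
    simp only [PFormula.Sat] at hs ⊢
    intro h' hdisj hsata
    -- build a copy h'' of h' with fresh anonymous cells
    set NamedK : Finset ℕ := h'.keys.filter (fun l => Named sx L l) with hNamedK
    have hinf : ({l : ℕ | ¬ (l ∈ namedFinset sx L ∪ h'.keys ∪ h₁.keys)} : Set ℕ).Infinite := by
      have hfin : (↑(namedFinset sx L ∪ h'.keys ∪ h₁.keys) : Set ℕ).Finite :=
        Finset.finite_toSet _
      have := hfin.infinite_compl
      convert this using 1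
      ext l
      simp
    obtain ⟨Fresh, hFsub, hFcard⟩ := hinf.exists_subset_card_eq (anonCount sx L h')
    have hFresh : ∀ l ∈ Fresh, ¬ Named sx L l ∧ l ∉ h'.keys ∧ l ∉ h₁.keys := by
      intro l hl
      have := hFsub hl
      simp only [Set.mem_setOf_eq, Finset.mem_union, not_or] at this
      exact ⟨fun hN => this.1.1 (named_mem_namedFinset sx L hN), this.1.2, this.2⟩
    set f' : ℕ → Word := fun l => (h'.lookup l).getD [] with hf'
    set h'' : Heap := mkHeap (NamedK ∪ Fresh) f' with hh''
    have hkeys'' : h''.keys = NamedK ∪ Fresh := keys_mkHeap _ _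
    have hf'_some : ∀ l ∈ h'.keys, h'.lookup l = some (f' l) := by
      intro l hl
      obtain ⟨v, hv⟩ := Finmap.mem_iff.1 (Finmap.mem_keys.1 hl)
      simp [hf', hv]
    have hanon'' : anonCount sx L h'' = anonCount sx L h' := by
      unfold anonCount
      rw [hkeys'', Finset.filter_union]
      have h1 : NamedK.filter (fun l => ¬ Named sx L l) = ∅ := by
        rw [Finset.filter_eq_empty_iff]
        intro a hha
        simp only [not_not]
        exact (Finset.mem_filter.1 hha).2
      have h2 : Fresh.filter (fun l => ¬ Named sx L l) = Fresh := by
        rw [Finset.filter_true_of_mem]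
        intro a hha
        exact (hFresh a hha).1
      rw [h1, h2, Finset.empty_union, hFcard]
      rfl
    have hequiv' : ∀ n, HEquiv sx L TV n h' h'' := by
      intro n
      constructor
      · intro l hN
        by_cases hl' : l ∈ h'
        · have hlk : l ∈ NamedK ∪ Fresh :=
            Finset.mem_union_left _ (Finset.mem_filter.2 ⟨Finmap.mem_keys.2 hl', hN⟩)
          rw [hh'', lookup_mkHeap, if_pos hlk, hf'_some l (Finmap.mem_keys.2 hl')]
          exact OEq.refl' TV _
        · have hlk : l ∉ NamedK ∪ Fresh := by
            rw [Finset.mem_union]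
            rintro (hmem | hmem)
            · exact hl' (Finmap.mem_keys.1 (Finset.mem_filter.1 hmem).1)
            · exact (hFresh l hmem).1 hN
          rw [hh'', lookup_mkHeap, if_neg hlk, Finmap.lookup_eq_none.2 hl']
          trivial
      · rw [hanon'']
    have hsata'' : φa.Sat sx sa h'' :=
      iha (fun x hx => hfv x (Finset.mem_union_left _ hx))
        (fun t ht => hT t (Finset.mem_union_left _ ht)) h' h'' (hequiv' φa.sz) hsata
    have hdisj'' : h''.Disjoint h₁ := by
      intro l hl hl₁
      rw [hh'', mem_mkHeap] at hl
      rcases Finset.mem_union.1 hl with hl | hl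
      · have hl' := Finset.mem_filter.1 hl
        have hN := hl'.2
        have hmem' : l ∈ h' := Finmap.mem_keys.1 hl'.1
        obtain ⟨v₁, hv₁⟩ := Finmap.mem_iff.1 hl₁
        have h1 := he.1 l hN
        rw [hv₁] at h1
        obtain ⟨v₂, hv₂, _⟩ := oeq_some_left TV h1
        exact hdisj l hmem' (Finmap.mem_of_lookup_eq_some hv₂)
      · exact (hFresh l hl).2.2 (Finmap.mem_keys.2 hl₁)
    have hsatb := hs h'' hdisj'' hsata''
    -- transfer from h'' ∪ h₁ to h' ∪ h₂
    apply ihb (fun x hx => hfv x (Finset.mem_union_right _ hx))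
      (fun t ht => hT t (Finset.mem_union_right _ ht)) (h'' ∪ h₁) (h' ∪ h₂) ?_ hsatb
    constructor
    · intro l hN
      by_cases hl' : l ∈ h'
      · have hl'' : l ∈ h'' := by
          rw [hh'', mem_mkHeap]
          exact Finset.mem_union_left _ (Finset.mem_filter.2 ⟨Finmap.mem_keys.2 hl', hN⟩)
        rw [Finmap.lookup_union_left hl'', Finmap.lookup_union_left hl']
        rw [hh'', lookup_mkHeap,
          if_pos (Finset.mem_union_left _ (Finset.mem_filter.2 ⟨Finmap.mem_keys.2 hl', hN⟩)),
          hf'_some l (Finmap.mem_keys.2 hl')]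
        exact OEq.refl' TV _
      · have hl'' : l ∉ h'' := by
          rw [hh'', mem_mkHeap, Finset.mem_union]
          rintro (hmem | hmem)
          · exact hl' (Finmap.mem_keys.1 (Finset.mem_filter.1 hmem).1)
          · exact (hFresh l hmem).1 hN
        rw [Finmap.lookup_union_right hl'', Finmap.lookup_union_right hl']
        exact he.1 l hN
    · have hd1 : anonCount sx L (h'' ∪ h₁) = anonCount sx L h'' + anonCount sx L h₁ :=
        anonCount_union sx L hdisj''
      have hd2 : anonCount sx L (h' ∪ h₂) = anonCount sx L h' + anonCount sx L h₂ :=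
        anonCount_union sx L hdisj
      have h2 := he.2
      simp only [PFormula.sz] at h2 ⊢
      rw [hd1, hd2, hanon'']
      omega

end SmallModelAux

namespace SmallModelAux

theorem eval_congr (sx : ℕ → SVal) {sa sa' : ℕ → Word} :
    ∀ t : STerm, (∀ a ∈ t.fva, sa a = sa' a) → t.eval sx sa = t.eval sx sa' := by
  intro t
  induction t with
  | eps => intro; rfl
  | atom t => intro; rfl
  | svar a => intro h; exact h a (by simp [STerm.fva])
  | conc t₁ t₂ ih₁ ih₂ =>
    intro h
    have h₁ := ih₁ fun a ha => h a (by simp [STerm.fva]; exact Or.inl ha)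
    have h₂ := ih₂ fun a ha => h a (by simp [STerm.fva]; exact Or.inr ha)
    simp [STerm.eval, h₁, h₂]

theorem sat_congr (sx : ℕ → SVal) {sa sa' : ℕ → Word} :
    ∀ φ : PFormula, (∀ a ∈ φ.fva, sa a = sa' a) →
      ∀ hp : Heap, (φ.Sat sx sa hp ↔ φ.Sat sx sa' hp) := by
  intro φ
  induction φ with
  | eqx t₁ t₂ => intro _ hp; simp [PFormula.Sat]
  | eqs t₁ t₂ =>
    intro h hp
    have h₁ := eval_congr sx t₁ fun a ha => h a (by simp [PFormula.fva]; exact Or.inl ha)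
    have h₂ := eval_congr sx t₂ fun a ha => h a (by simp [PFormula.fva]; exact Or.inr ha)
    simp [PFormula.Sat, h₁, h₂]
  | fls => intro _ hp; simp [PFormula.Sat]
  | imp φa φb iha ihb =>
    intro h hp
    have ha := iha fun a ha => h a (by simp [PFormula.fva]; exact Or.inl ha)
    have hb := ihb fun a ha => h a (by simp [PFormula.fva]; exact Or.inr ha)
    simp only [PFormula.Sat]
    rw [ha hp, hb hp]
  | emp => intro _ hp; simp [PFormula.Sat]
  | pto x t =>
    intro h hp
    have ht := eval_congr sx t fun a ha => h a (by simpa [PFormula.fva] using ha)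
    simp [PFormula.Sat, ht]
  | star φa φb iha ihb =>
    intro h hp
    have ha := iha fun a ha => h a (by simp [PFormula.fva]; exact Or.inl ha)
    have hb := ihb fun a ha => h a (by simp [PFormula.fva]; exact Or.inr ha)
    simp only [PFormula.Sat]
    constructor
    · rintro ⟨h₁, h₂, hd, rfl, s₁, s₂⟩
      exact ⟨h₁, h₂, hd, rfl, (ha h₁).1 s₁, (hb h₂).1 s₂⟩
    · rintro ⟨h₁, h₂, hd, rfl, s₁, s₂⟩
      exact ⟨h₁, h₂, hd, rfl, (ha h₁).2 s₁, (hb h₂).2 s₂⟩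
  | wand φa φb iha ihb =>
    intro h hp
    have ha := iha fun a ha => h a (by simp [PFormula.fva]; exact Or.inl ha)
    have hb := ihb fun a ha => h a (by simp [PFormula.fva]; exact Or.inr ha)
    simp only [PFormula.Sat]
    constructor
    · intro hsat h₁ hd hs₁
      exact (hb _).1 (hsat h₁ hd ((ha h₁).2 hs₁))
    · intro hsat h₁ hd hs₁
      exact (hb _).2 (hsat h₁ hd ((ha h₁).1 hs₁))

end SmallModelAux

open SmallModelAux in
/-- Small model property of separating implication.  Here `sa'` extends `sa`
by assigning to the fresh sequence variable `βbar` a word `w` different from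
the value of every sequence term of `φ₁ -* φ₂`; the set `D` is
`B ∪ sx(L)` where `L = FV_x(φ₁) ∪ FV_x(φ₂)` and `B` consists of the first
`max(sz φ₁, sz φ₂)` locations outside `dom(h) ∪ sx(L)`, and the range `R`
consists of the values of the sequence terms of `φ₁ -* φ₂` together with `ε`
and `w = sa'(βbar)`. -/
theorem small_model_property_of_wand
    (sx : ℕ → SVal) (sa : ℕ → Word) (h : Heap) (φ₁ φ₂ : PFormula)
    (βbar : ℕ) (hfresh : βbar ∉ (φ₁.wand φ₂).fva)
    (w : Word) (sa' : ℕ → Word) (hsa' : sa' = Function.update sa βbar w)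
    (hw : ∀ t ∈ (φ₁.wand φ₂).seqTerms, STerm.eval sx sa' t ≠ w) :
    PFormula.Sat sx sa (φ₁.wand φ₂) h ↔
      ∀ h' : Heap, h'.Disjoint h → PFormula.Sat sx sa' φ₁ h' →
        (∀ l ∈ h'.keys,
          l ∈ firstN
    {l' : ℕ | l' ∉ h.keys ∧ ∀ x ∈ φ₁.fvx ∪ φ₂.fvx, sx x ≠ Sum.inl l'}
                (max φ₁.sz φ₂.sz) ∨
          ∃ x ∈ φ₁.fvx ∪ φ₂.fvx, sx x = Sum.inl l) →
        (∀ (l : ℕ) (w' : Word), h'.lookup l = some w' →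
          (∃ t ∈ (φ₁.wand φ₂).seqTerms, STerm.eval sx sa' t = w') ∨
            w' = [] ∨ w' = w) →
        PFormula.Sat sx sa' φ₂ (h' ∪ h) := by

  classical
  set L : Finset ℕ := φ₁.fvx ∪ φ₂.fvx with hL
  set TV : Finset Word := (φ₁.wand φ₂).seqTerms.image (STerm.eval sx sa') with hTV
  set k : ℕ := max φ₁.sz φ₂.sz with hk
  -- coincidence between `sa` and `sa'`
  have hcoin : ∀ hp : Heap, PFormula.Sat sx sa (φ₁.wand φ₂) hp ↔
      PFormula.Sat sx sa' (φ₁.wand φ₂) hp := by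
    intro hp
    apply sat_congr
    intro a ha
    have hne : a ≠ βbar := fun hab => hfresh (hab ▸ ha)
    rw [hsa', Function.update_apply, if_neg hne]
  have hWnotTV : w ∉ TV := by
    rw [hTV]
    intro hmem
    obtain ⟨t, ht, heq⟩ := Finset.mem_image.1 hmem
    exact hw t ht heq
  -- the set `S` of the statement is the set of anonymous locations outside `h`
  set p : ℕ → Prop := fun l => l ∉ h.keys ∧ ¬ Named sx L l with hp
  have hSet : {l' : ℕ | l' ∉ h.keys ∧ ∀ x ∈ φ₁.fvx ∪ φ₂.fvx, sx x ≠ Sum.inl l'} =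
      setOf p := by
    ext l
    simp only [Set.mem_setOf_eq, hp, Named, ← hL]
    push_neg
    rfl
  constructor
  · -- easy direction
    intro hsat h' hd hs₁ _ _
    rw [hcoin] at hsat
    exact hsat h' hd hs₁
  · -- hard direction
    intro hR
    rw [hcoin]
    simp only [PFormula.Sat]
    intro h₁ hd hsat1
    set m : ℕ := min k (anonCount sx L h₁) with hm
    have hpinf : (setOf p).Infinite := by
      have hfin : (↑(h.keys ∪ namedFinset sx L) : Set ℕ).Finite := Finset.finite_toSet _
      apply hfin.infinite_compl.mono
      intro l hl
      simp only [Set.mem_compl_iff, Finset.coe_union, Set.mem_union, Finset.mem_coe,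
        not_or] at hl
      exact ⟨hl.1, fun hN => hl.2 (named_mem_namedFinset sx L hN)⟩
    set F : Finset ℕ := (Finset.range m).image (Nat.nth p) with hF
    have hFcard : F.card = m := by
      rw [hF, Finset.card_image_of_injOn ((Nat.nth_injective hpinf).injOn),
        Finset.card_range]
    have hFp : ∀ l ∈ F, p l := by
      intro l hl
      obtain ⟨i, _, rfl⟩ := Finset.mem_image.1 hl
      exact Nat.nth_mem_of_infinite hpinf i
    have hFfirst : ∀ l ∈ F, l ∈ firstN (setOf p) k := by
      intro l hl
      obtain ⟨i, hi, rfl⟩ := Finset.mem_image.1 hl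
      rw [Finset.mem_range] at hi
      refine ⟨Nat.nth_mem_of_infinite hpinf i, ?_⟩
      have hbr : {l' ∈ setOf p | l' < Nat.nth p i} =
          ↑((Finset.range (Nat.nth p i)).filter p) := by
        ext a
        simp only [Set.mem_setOf_eq, Finset.coe_filter, Finset.mem_range]
        exact ⟨fun ⟨h1, h2⟩ => ⟨h2, h1⟩, fun ⟨h1, h2⟩ => ⟨h2, h1⟩⟩
      rw [hbr, Set.ncard_coe_finset, ← Nat.count_eq_card_filter_range,
        Nat.count_nth_of_infinite hpinf]
      omega
    set NamedK1 : Finset ℕ := h₁.keys.filter (Named sx L) with hNamedK1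
    set g : ℕ → Word := fun l =>
      if Named sx L l then
        (if (h₁.lookup l).getD [] ∈ TV then (h₁.lookup l).getD [] else w)
      else w with hg
    set hsmall : Heap := mkHeap (NamedK1 ∪ F) g with hhsmall
    have hkeys_small : hsmall.keys = NamedK1 ∪ F := keys_mkHeap _ _
    have hF_disj_N : ∀ l ∈ F, l ∉ NamedK1 := by
      intro l hl hmem
      exact (hFp l hl).2 (Finset.mem_filter.1 hmem).2
    have hanon_small : anonCount sx L hsmall = m := by
      unfold anonCount
      rw [hkeys_small, Finset.filter_union]
      have h1 : NamedK1.filter (fun l => ¬ Named sx L l) = ∅ := by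
        rw [Finset.filter_eq_empty_iff]
        intro a ha
        simp only [not_not]
        exact (Finset.mem_filter.1 ha).2
      have h2 : F.filter (fun l => ¬ Named sx L l) = F :=
        Finset.filter_true_of_mem fun a ha => (hFp a ha).2
      rw [h1, h2, Finset.empty_union, hFcard]
    -- HEquiv k h₁ hsmall
    have hequiv1 : HEquiv sx L TV k h₁ hsmall := by
      constructor
      · intro l hN
        by_cases hl1 : l ∈ h₁
        · obtain ⟨v, hv⟩ := Finmap.mem_iff.1 hl1
          have hlk : l ∈ NamedK1 ∪ F :=
            Finset.mem_union_left _ (Finset.mem_filter.2 ⟨Finmap.mem_keys.2 hl1, hN⟩)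
          rw [hv, hhsmall, lookup_mkHeap, if_pos hlk]
          have hgl : g l = if v ∈ TV then v else w := by
            simp [hg, hN, hv]
          rw [hgl]
          by_cases hvTV : v ∈ TV
          · rw [if_pos hvTV]; exact VEq.refl' TV v
          · rw [if_neg hvTV]; exact Or.inr ⟨hvTV, hWnotTV⟩
        · have hlk : l ∉ NamedK1 ∪ F := by
            rw [Finset.mem_union]
            rintro (hmem | hmem)
            · exact hl1 (Finmap.mem_keys.1 (Finset.mem_filter.1 hmem).1)
            · exact (hFp l hmem).2 hN
          rw [Finmap.lookup_eq_none.2 hl1, hhsmall, lookup_mkHeap, if_neg hlk]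
          trivial
      · rw [hanon_small]
        omega
    have hsat_small : PFormula.Sat sx sa' φ₁ hsmall :=
      sat_of_hequiv sx L TV sa' φ₁
        (fun x hx => Finset.mem_union_left _ hx)
        (fun t ht => Finset.mem_image.2 ⟨t, Finset.mem_union_left _ ht, rfl⟩)
        h₁ hsmall (HEquiv.mono' sx L TV (le_max_left _ _) hequiv1) hsat1
    have hdisj_small : hsmall.Disjoint h := by
      intro l hl hlh
      rw [hhsmall, mem_mkHeap] at hl
      rcases Finset.mem_union.1 hl with hl | hl
      · exact hd l (Finmap.mem_keys.1 (Finset.mem_filter.1 hl).1) hlh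
      · exact (hFp l hl).1 (Finmap.mem_keys.2 hlh)
    have hsatR := hR hsmall hdisj_small hsat_small ?_ ?_
    · -- transfer Sat φ₂ (hsmall ∪ h) to Sat φ₂ (h₁ ∪ h)
      apply sat_of_hequiv sx L TV sa' φ₂
        (fun x hx => Finset.mem_union_right _ hx)
        (fun t ht => Finset.mem_image.2 ⟨t, Finset.mem_union_right _ ht, rfl⟩)
        (hsmall ∪ h) (h₁ ∪ h) ?_ hsatR
      constructor
      · intro l hN
        by_cases hl1 : l ∈ h₁
        · obtain ⟨v, hv⟩ := Finmap.mem_iff.1 hl1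
          have hlk : l ∈ NamedK1 ∪ F :=
            Finset.mem_union_left _ (Finset.mem_filter.2 ⟨Finmap.mem_keys.2 hl1, hN⟩)
          have hlsm : l ∈ hsmall := by rw [hhsmall, mem_mkHeap]; exact hlk
          rw [Finmap.lookup_union_left hlsm, Finmap.lookup_union_left hl1, hv,
            hhsmall, lookup_mkHeap, if_pos hlk]
          have hgl : g l = if v ∈ TV then v else w := by
            simp [hg, hN, hv]
          rw [hgl]
          by_cases hvTV : v ∈ TV
          · rw [if_pos hvTV]; exact VEq.refl' TV v
          · rw [if_neg hvTV]; exact Or.inr ⟨hWnotTV, hvTV⟩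
        · have hlsm : l ∉ hsmall := by
            rw [hhsmall, mem_mkHeap, Finset.mem_union]
            rintro (hmem | hmem)
            · exact hl1 (Finmap.mem_keys.1 (Finset.mem_filter.1 hmem).1)
            · exact (hFp l hmem).2 hN
          rw [Finmap.lookup_union_right hlsm, Finmap.lookup_union_right hl1]
          exact OEq.refl' TV _
      · have hd1 : anonCount sx L (hsmall ∪ h) = anonCount sx L hsmall + anonCount sx L h :=
          anonCount_union sx L hdisj_small
        have hd2 : anonCount sx L (h₁ ∪ h) = anonCount sx L h₁ + anonCount sx L h :=
          anonCount_union sx L hd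
        rw [hd1, hd2, hanon_small]
        have hszk : φ₂.sz ≤ k := le_max_right _ _
        omega
    · -- domain condition
      intro l hl
      rw [hkeys_small] at hl
      rcases Finset.mem_union.1 hl with hl | hl
      · exact Or.inr ((Finset.mem_filter.1 hl).2)
      · rw [hSet]
        exact Or.inl (hFfirst l hl)
    · -- range condition
      intro l w' hlk
      rw [hhsmall, lookup_mkHeap] at hlk
      by_cases hmem : l ∈ NamedK1 ∪ F
      · rw [if_pos hmem] at hlk
        have hw' : w' = g l := by injection hlk.symm
        subst hw'
        simp only [hg]
        by_cases hN : Named sx L l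
        · rw [if_pos hN]
          by_cases hvTV : (h₁.lookup l).getD [] ∈ TV
          · rw [if_pos hvTV]
            obtain ⟨t, ht, heq⟩ := Finset.mem_image.1 hvTV
            exact Or.inl ⟨t, ht, heq⟩
          · rw [if_neg hvTV]
            exact Or.inr (Or.inr rfl)
        · rw [if_neg hN]
          exact Or.inr (Or.inr rfl)
      · rw [if_neg hmem] at hlk
        exact absurd hlk (by simp)
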